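/- (Recursion Theorem, fixed-point form with parameters) Let A ⊆ ℕ be an infinite computably enumerable set and let θ be a quasi-Gödel numbering of S_A. Then for every total computable f : ℕ → ℕ → ℕ there is a total computable e : ℕ → ℕ such that for all y: θ (f (e y) y) = θ (e y). -/

import Mathlib

/-- `r : ℕ →. ℕ` is an initial-segment function for `A`: its domain is empty or
equals `{m | m < a}` for some `a ∈ A`. -/
def IsInitSeg (A : Set ℕ) (r : ℕ →. ℕ) : Prop :=
  {x : ℕ | (r x).Dom} = (∅ : Set ℕ) ∨ ∃ a ∈ A, {x : ℕ | (r x).Dom} = {m : ℕ | m < a}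

/-- `SA A` is the class of unary partial functions that are either total computable
or initial-segment functions for `A`. -/
def SA (A : Set ℕ) : Set (ℕ →. ℕ) :=
  {r | (∃ f : ℕ → ℕ, Computable f ∧ ∀ x, r x = Part.some (f x)) ∨ IsInitSeg A r}

/-- The extended graph of a unary partial function. -/
def graphE (q : ℕ →. ℕ) : Set ℕ :=
  {n | ∃ y, n = Nat.pair y 0} ∪ {n | ∃ x z, q x = Part.some z ∧ n = Nat.pair x (z + 1)}

/-- The graph of a unary partial function. -/
def pgraph (q : ℕ →. ℕ) : Set ℕ :=
  {n | ∃ x z, q x = Part.some z ∧ n = Nat.pair x z}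

/-- Condition (QGN I): the extended graph of the universal function of `θ` is
enumerated by a total computable function. -/
def QGN1 (θ : ℕ → ℕ →. ℕ) : Prop :=
  ∃ h : ℕ → ℕ, Computable h ∧
    Set.range h = {n | ∃ w, n = Nat.pair w 0} ∪
      {n | ∃ i x z, θ i x = Part.some z ∧ n = Nat.pair (Nat.pair i x) (z + 1)}

/-- Condition (QGN II). -/
def QGN2 (A : Set ℕ) (θ : ℕ → ℕ →. ℕ) : Prop :=
  ∀ k : ℕ → ℕ → ℕ, Computable₂ k →
    ∃ v : ℕ → ℕ, Computable v ∧
      ∀ i, ∀ r ∈ SA A, Set.range (k i) = graphE r → θ (v i) = r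

/-- A quasi-Gödel numbering of `SA A`. -/
def QuasiGodel (A : Set ℕ) (θ : ℕ → ℕ →. ℕ) : Prop :=
  Set.range θ = SA A ∧ QGN1 θ ∧ QGN2 A θ

/-- A set of naturals is computably enumerable. -/
def CEset (C : Set ℕ) : Prop :=
  C = ∅ ∨ ∃ g : ℕ → ℕ, Computable g ∧ C = Set.range g

/-- The standard Gödel numbering of the unary partial recursive functions. -/
def phi (i : ℕ) : ℕ →. ℕ :=
  Nat.Partrec.Code.eval (Denumerable.ofNat Nat.Partrec.Code i)

open Nat.Partrec (Code)
open Nat.Partrec.Code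

/-- Enumeration of the extended graph of `phi c`, uniformly in `c`. -/
def kfun (c n : ℕ) : ℕ :=
  if n % 2 = 0 then Nat.pair (n / 2) 0
  else
    Option.casesOn
      (Nat.Partrec.Code.evaln (n / 2).unpair.1 (Denumerable.ofNat Nat.Partrec.Code c)
        (n / 2).unpair.2)
      (Nat.pair 0 0) fun z => Nat.pair (n / 2).unpair.2 (z + 1)

lemma kfun_comp : Computable₂ kfun := by
  have h1 : Primrec₂ kfun := by
    unfold kfun
    apply Primrec.ite (Primrec.eq.comp (Primrec.nat_mod.comp Primrec.snd (Primrec.const 2))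
      (Primrec.const 0))
    · exact Primrec₂.natPair.comp (Primrec.nat_div.comp Primrec.snd (Primrec.const 2))
        (Primrec.const 0)
    · apply Primrec.option_casesOn
        (o := fun p : ℕ × ℕ => Nat.Partrec.Code.evaln (p.2 / 2).unpair.1
          (Denumerable.ofNat Nat.Partrec.Code p.1) (p.2 / 2).unpair.2)
      · have hu : Primrec fun p : ℕ × ℕ => (p.2 / 2).unpair :=
          Primrec.unpair.comp (Primrec.nat_div.comp Primrec.snd (Primrec.const 2))
        exact Nat.Partrec.Code.primrec_evaln.comp
          (((Primrec.fst.comp hu).pair ((Primrec.ofNat Code).comp Primrec.fst)).pair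
            (Primrec.snd.comp hu))
      · exact Primrec.const (Nat.pair 0 0)
      · exact Primrec₂.natPair.comp (Primrec.snd.comp (Primrec.unpair.comp
          (Primrec.nat_div.comp (Primrec.snd.comp Primrec.fst) (Primrec.const 2))))
          (Primrec.succ.comp Primrec.snd)
  exact h1.to_comp

lemma kfun_range (c : ℕ) : Set.range (kfun c) = graphE (phi c) := by
  ext n
  constructor
  · rintro ⟨m, rfl⟩
    by_cases hm : m % 2 = 0
    · exact Or.inl ⟨m / 2, by simp [kfun, hm]⟩
    · rcases he : Nat.Partrec.Code.evaln (m / 2).unpair.1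
        (Denumerable.ofNat Nat.Partrec.Code c) (m / 2).unpair.2 with _ | z
      · exact Or.inl ⟨0, by simp [kfun, hm, he]⟩
      · refine Or.inr ⟨(m / 2).unpair.2, z, ?_, by simp [kfun, hm, he]⟩
        exact Part.eq_some_iff.2 (Nat.Partrec.Code.evaln_sound (by simpa using he))
  · rintro (⟨y, rfl⟩ | ⟨x, z, hz, rfl⟩)
    · exact ⟨2 * y, by simp [kfun, Nat.mul_div_cancel_left _ (by norm_num : 0 < 2)]⟩
    · obtain ⟨s, hs⟩ := Nat.Partrec.Code.evaln_complete.1 (Part.eq_some_iff.1 hz)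
      refine ⟨2 * Nat.pair s x + 1, ?_⟩
      have h2 : (2 * Nat.pair s x + 1) % 2 = 1 := by omega
      have h3 : (2 * Nat.pair s x + 1) / 2 = Nat.pair s x := by omega
      simp only [kfun, h2, h3]
      simp [Option.mem_def.1 hs]

/-- Recursion Theorem (fixed-point form with parameters). -/
theorem recursion_theorem (A : Set ℕ) (hAinf : A.Infinite) (hAce : CEset A)
    (θ : ℕ → ℕ →. ℕ) (hθ : QuasiGodel A θ)
    (f : ℕ → ℕ → ℕ) (hf : Computable₂ f) :
    ∃ e : ℕ → ℕ, Computable e ∧ ∀ y, θ (f (e y) y) = θ (e y) := by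
  obtain ⟨hθrange, ⟨h, hcomp, hrange⟩, hQ2⟩ := hθ
  obtain ⟨v, hv, hvspec⟩ := hQ2 kfun kfun_comp
  -- the universal partial function of θ, computed from h
  set pred : ℕ → ℕ →. Bool :=
    fun q n => Part.some (decide ((h n).unpair.1 = q ∧ 0 < (h n).unpair.2)) with hpred
  set U : ℕ →. ℕ :=
    fun q => (Nat.rfind (pred q)).map fun n => (h n).unpair.2 - 1 with hUdef
  have hU : Partrec U := by
    have hbfn : Primrec fun t : ℕ × ℕ × ℕ => decide (t.1 = t.2.1 ∧ 0 < t.2.2) :=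
      (PrimrecPred.and (Primrec.eq.comp Primrec.fst (Primrec.fst.comp Primrec.snd))
        (Primrec.nat_lt.comp (Primrec.const 0) (Primrec.snd.comp Primrec.snd))).decide
    have hhn : Computable fun p : ℕ × ℕ => Nat.unpair (h p.2) :=
      Computable.unpair.comp (hcomp.comp Computable.snd)
    have hb : Computable₂ fun q n : ℕ =>
        decide ((h n).unpair.1 = q ∧ 0 < (h n).unpair.2) := by
      have := hbfn.to_comp.comp
        (((Computable.fst.comp hhn).pair
          (Computable.fst.pair (Computable.snd.comp hhn))) :
          Computable fun p : ℕ × ℕ => ((h p.2).unpair.1, p.1, (h p.2).unpair.2))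
      exact this.of_eq fun p => rfl
    apply Partrec.map
    · exact Partrec.rfind hb.partrec₂
    · exact (Primrec.pred.to_comp.comp (Computable.snd.comp hhn)).to₂
  have fwd : ∀ i x n, n ∈ Nat.rfind (pred (Nat.pair i x)) →
      ((h n).unpair.2 - 1) ∈ θ i x := by
    intro i x n hn
    have htrue := Nat.rfind_spec hn
    simp only [hpred, Part.mem_some_iff] at htrue
    have hP : (h n).unpair.1 = Nat.pair i x ∧ 0 < (h n).unpair.2 := by
      simpa using htrue.symm
    have hmem : h n ∈ Set.range h := ⟨n, rfl⟩
    rw [hrange] at hmem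
    rcases hmem with ⟨w, hw⟩ | ⟨i', x', z', hz', hw⟩
    · rw [hw, Nat.unpair_pair] at hP
      exact absurd hP.2 (by simp)
    · rw [hw, Nat.unpair_pair] at hP
      obtain ⟨hix, -⟩ := hP
      obtain ⟨hi, hx⟩ := Nat.pair_eq_pair.1 hix
      subst hi; subst hx
      rw [hw, Nat.unpair_pair]
      simpa [hz'] using Part.mem_some z'
  have hUeq : ∀ i x, U (Nat.pair i x) = θ i x := by
    intro i x
    apply Part.ext
    intro z
    constructor
    · intro hzin
      obtain ⟨n, hn, rfl⟩ := (Part.mem_map_iff _).1 hzin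
      exact fwd i x n hn
    · intro hz
      obtain ⟨n, hn⟩ : ∃ n, h n = Nat.pair (Nat.pair i x) (z + 1) := by
        have : Nat.pair (Nat.pair i x) (z + 1) ∈ Set.range h := by
          rw [hrange]; exact Or.inr ⟨i, x, z, Part.eq_some_iff.2 hz, rfl⟩
        exact this
      have htrue : true ∈ pred (Nat.pair i x) n := by
        simp [hpred, hn, Nat.unpair_pair]
      have hdom : (Nat.rfind (pred (Nat.pair i x))).Dom :=
        Nat.rfind_dom.2 ⟨n, htrue, fun {_} _ => trivial⟩
      obtain ⟨m, hm⟩ := Part.dom_iff_mem.1 hdom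
      have := fwd i x m hm
      have hzz := Part.mem_unique this hz
      exact (Part.mem_map_iff _).2 ⟨m, hm, hzz⟩
  -- the self-referential function
  set g : Code → ℕ → ℕ := fun d p =>
    Nat.pair (f (v (Encodable.encode (Nat.Partrec.Code.curry d p.unpair.1))) p.unpair.1)
      p.unpair.2 with hgdef
  have hg : Computable₂ g := by
    have h1 : Primrec fun q : Code × ℕ =>
        Encodable.encode (Nat.Partrec.Code.curry q.1 q.2.unpair.1) :=
      Primrec.encode.comp (Nat.Partrec.Code.primrec₂_curry.comp Primrec.fst
        (Primrec.fst.comp (Primrec.unpair.comp Primrec.snd)))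
    have ha : Computable fun q : Code × ℕ =>
        f (v (Encodable.encode (Nat.Partrec.Code.curry q.1 q.2.unpair.1))) q.2.unpair.1 :=
      hf.comp (hv.comp h1.to_comp)
        (Computable.fst.comp (Computable.unpair.comp Computable.snd))
    exact Primrec₂.natPair.to_comp.comp ha
      (Primrec.snd.comp (Primrec.unpair.comp Primrec.snd)).to_comp
  have hF : Partrec₂ fun (d : Code) (p : ℕ) => U (g d p) := hU.comp hg
  obtain ⟨c, hc⟩ := Nat.Partrec.Code.fixed_point₂ hF
  refine ⟨fun y => v (Encodable.encode (Nat.Partrec.Code.curry c y)), ?_, ?_⟩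
  · exact hv.comp (Primrec.encode.comp
      (Nat.Partrec.Code.primrec₂_curry.comp (Primrec.const c) Primrec.id)).to_comp
  · intro y
    set e : ℕ := v (Encodable.encode (Nat.Partrec.Code.curry c y)) with hedef
    have key : phi (Encodable.encode (Nat.Partrec.Code.curry c y)) = θ (f e y) := by
      funext x
      have h1 : phi (Encodable.encode (Nat.Partrec.Code.curry c y)) x
          = Nat.Partrec.Code.eval c (Nat.pair y x) := by
        rw [phi, Denumerable.ofNat_encode, Nat.Partrec.Code.eval_curry]
      rw [h1, hc]
      show U (g c (Nat.pair y x)) = _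
      rw [hgdef]
      simp only [Nat.unpair_pair]
      exact hUeq (f e y) x
    have hmem : θ (f e y) ∈ SA A := by
      rw [← hθrange]; exact ⟨f e y, rfl⟩
    have hgr : Set.range (kfun (Encodable.encode (Nat.Partrec.Code.curry c y)))
        = graphE (θ (f e y)) := by
      rw [kfun_range, key]
    exact (hvspec _ _ hmem hgr).symm
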